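/- Assume (B1)–(B3), that the feasible set F := {z ∈ H : g(z) ∈ −K} is nonempty, and let λ > 0, σ ∈ (0, 1/√2], c̃ > 0, z⁻ ∈ H, p⁻ ∈ ℝ^ℓ. Suppose (z, v, ε) ∈ H × ℝ^n × ℝ_+ satisfies the prox condition with data (λ, σ, c̃, z⁻, p⁻), set p := Π_{K*}(p⁻ + c̃ g(z)), and suppose ‖p‖ ≤ C and ‖p⁻‖ ≤ C for some C ≥ 0. Then L_{c̃}(z;p) ≤ φ* + D_h²/λ + 4C²/c̃, where φ* := inf{f(u) + h(u) : u ∈ F}. -/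

import Mathlib

open RealInnerProductSpace Pointwise

/-- The dual cone of a set in a real inner product space. -/
def dualCone {F : Type*} [NormedAddCommGroup F] [InnerProductSpace ℝ F] (K : Set F) : Set F :=
  {y | ∀ x ∈ K, 0 ≤ ⟪y, x⟫}

/-- `p` is the Euclidean projection of `x` onto `S`. -/
def IsProjOn {F : Type*} [NormedAddCommGroup F] [InnerProductSpace ℝ F]
    (S : Set F) (x p : F) : Prop :=
  p ∈ S ∧ ∀ y ∈ S, dist x p ≤ dist x y

/-- `g` is `K`-convex. -/
def KConvex {E F : Type*} [NormedAddCommGroup E] [InnerProductSpace ℝ E]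
    [NormedAddCommGroup F] [InnerProductSpace ℝ F] (K : Set F) (g : E → F) : Prop :=
  ∀ z z' : E, ∀ t : ℝ, t ∈ Set.Icc (0 : ℝ) 1 →
    g (t • z' + (1 - t) • z) - t • g z' - (1 - t) • g z ∈ -K

/-- The ε-subdifferential at `z` of a proper extended-real-valued function represented by
its effective domain `D` and its real values `ψ` on `D` (the function equals `+∞` off `D`). -/
def epsSubdiff {E : Type*} [NormedAddCommGroup E] [InnerProductSpace ℝ E]
    (D : Set E) (ψ : E → ℝ) (ε : ℝ) (z : E) : Set E :=
  {u | ∀ z' ∈ D, ψ z + ⟪u, z' - z⟫ - ε ≤ ψ z'}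

/-- The augmented Lagrangian `L_c(z;p)`; the proper closed convex function `h` is represented
by its real values on its effective domain `H`. -/
noncomputable def AugLag {E F : Type*} [NormedAddCommGroup E] [InnerProductSpace ℝ E]
    [NormedAddCommGroup F] [InnerProductSpace ℝ F]
    (K : Set F) (f h : E → ℝ) (g : E → F) (c : ℝ) (z : E) (p : F) : ℝ :=
  f z + h z + (1 / (2 * c)) * ((Metric.infDist (p + c • g z) (-K)) ^ 2 - ‖p‖ ^ 2)

section Aux

variable {F : Type*} [NormedAddCommGroup F] [InnerProductSpace ℝ F]

lemma obtuse_of_isProjOn {S : Set F} (hS : Convex ℝ S) {q p : F} (hp : IsProjOn S q p) :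
    ∀ w ∈ S, ⟪q - p, w - p⟫ ≤ 0 := by
  have hmem := hp.1
  have hbdd : BddBelow (Set.range fun w : S => ‖q - w‖) := by
    refine ⟨0, ?_⟩; rintro x ⟨w, rfl⟩; exact norm_nonneg _
  haveI : Nonempty S := ⟨⟨p, hmem⟩⟩
  have hiInf : ‖q - p‖ = ⨅ w : S, ‖q - w‖ := by
    refine le_antisymm (le_ciInf fun w => ?_) (ciInf_le hbdd ⟨p, hmem⟩)
    simpa [dist_eq_norm] using hp.2 w w.2
  exact (norm_eq_iInf_iff_real_inner_le_zero hS hmem).mp hiInf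

lemma moreau_infDist [CompleteSpace F] (K : Set F) (hKne : K.Nonempty) (hKcl : IsClosed K) (hKcvx : Convex ℝ K)
    (hKcone : ∀ t : ℝ, 0 < t → ∀ x ∈ K, t • x ∈ K)
    {q p : F} (hp : IsProjOn (dualCone K) q p) :
    Metric.infDist q (-K) = ‖p‖ := by
  obtain ⟨x0, hx0⟩ := hKne
  -- 0 ∈ K
  have hK0 : (0 : F) ∈ K := by
    have htend : Filter.Tendsto (fun n : ℕ => (1 / (n + 1) : ℝ) • x0) Filter.atTop (nhds 0) := by
      have := tendsto_one_div_add_atTop_nhds_zero_nat (𝕜 := ℝ)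
      simpa using this.smul_const x0
    refine hKcl.mem_of_tendsto htend (Filter.Eventually.of_forall fun n => ?_)
    exact hKcone _ (by positivity) _ hx0
  have hnegK0 : (0 : F) ∈ -K := by simpa using hK0
  -- dual cone basics
  have hCcvx : Convex ℝ (dualCone K) := by
    intro y1 h1 y2 h2 a b ha hb hab
    intro x hx
    have := h1 x hx; have := h2 x hx
    rw [inner_add_left, real_inner_smul_left, real_inner_smul_left]
    nlinarith [h1 x hx, h2 x hx]
  have hOb := obtuse_of_isProjOn hCcvx hp
  have hpC := hp.1
  -- orthogonality
  have horth : ⟪q - p, p⟫ = 0 := by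
    have h2p : (2 : ℝ) • p ∈ dualCone K := by
      intro x hx
      rw [real_inner_smul_left]
      nlinarith [hpC x hx]
    have hz : (0 : F) ∈ dualCone K := by intro x hx; simp
    have e1 := hOb _ h2p
    have e2 := hOb _ hz
    have h2p' : (2 : ℝ) • p - p = p := by
      rw [two_smul]; abel
    rw [h2p'] at e1
    rw [zero_sub, inner_neg_right] at e2
    linarith
  -- for all w in dual cone, ⟪q - p, w⟫ ≤ 0
  have hneg : ∀ w ∈ dualCone K, ⟪q - p, w⟫ ≤ 0 := by
    intro w hw
    have hpw : p + w ∈ dualCone K := by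
      intro x hx
      rw [inner_add_left]
      exact add_nonneg (hpC x hx) (hw x hx)
    have := hOb _ hpw
    simpa using this
  -- bipolar: p - q ∈ K
  let K' : ConvexCone ℝ F :=
    { carrier := K
      smul_mem' := by intro c hc x hx; exact hKcone c hc x hx
      add_mem' := by
        intro x hx y hy
        have hmid : (1/2 : ℝ) • x + (1/2 : ℝ) • y ∈ K :=
          hKcvx hx hy (by norm_num) (by norm_num) (by norm_num)
        have h2 := hKcone 2 (by norm_num) _ hmid
        have heq : (2:ℝ) • ((1/2 : ℝ) • x + (1/2 : ℝ) • y) = x + y := by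
          rw [smul_add, smul_smul, smul_smul]; norm_num
        rwa [heq] at h2 }
  let KP : ProperCone ℝ F :=
    { carrier := K
      add_mem' := fun hx hy => K'.add_mem hx hy
      zero_mem' := hK0
      smul_mem' := by
        intro c x hx
        rcases eq_or_lt_of_le c.2 with hc | hc
        · have hc0 : c = 0 := NNReal.eq hc.symm
          simp [hc0, hK0]
        · simpa [NNReal.smul_def] using hKcone c hc x hx
      isClosed' := hKcl }
  have hpq : p - q ∈ K := by
    by_contra hnot
    obtain ⟨y, hy, hy0⟩ := ProperCone.hyperplane_separation' KP (x₀ := p - q) hnot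
    have hyC : y ∈ dualCone K := fun x hx => by rw [real_inner_comm]; exact hy x hx
    have := hneg y hyC
    rw [show p - q = -(q - p) by abel, inner_neg_left] at hy0
    linarith
  have hqp : q - p ∈ -K := by
    rw [Set.mem_neg, neg_sub]; exact hpq
  -- upper bound
  have hupper : Metric.infDist q (-K) ≤ ‖p‖ := by
    have := Metric.infDist_le_dist_of_mem hqp (x := q)
    simpa [dist_eq_norm] using this
  -- lower bound
  have hlower : ‖p‖ ≤ Metric.infDist q (-K) := by
    rcases eq_or_ne p 0 with hp0 | hp0
    · simp [hp0, Metric.infDist_nonneg]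
    · have hpnorm : 0 < ‖p‖ := norm_pos_iff.mpr hp0
      by_contra hlt
      push_neg at hlt
      obtain ⟨k, hk, hdk⟩ := (Metric.infDist_lt_iff ⟨0, hnegK0⟩).mp hlt
      have hkK : -k ∈ K := Set.mem_neg.mp hk
      have h1 : 0 ≤ ⟪p, -k⟫ := hpC _ hkK
      have h2 : ‖p‖ ^ 2 ≤ ⟪q - k, p⟫ := by
        have hqp' : ⟪q, p⟫ = ‖p‖ ^ 2 := by
          have : ⟪q - p, p⟫ = ⟪q, p⟫ - ⟪p, p⟫ := inner_sub_left _ _ _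
          rw [horth] at *
          have hpp : ⟪p, p⟫ = ‖p‖ ^ 2 := real_inner_self_eq_norm_sq p
          linarith [this]
        have hkp : ⟪k, p⟫ ≤ 0 := by
          rw [inner_neg_right] at h1
          rw [real_inner_comm]; linarith
        rw [inner_sub_left, hqp']; linarith
      have h3 : ⟪q - k, p⟫ ≤ ‖q - k‖ * ‖p‖ := real_inner_le_norm _ _
      have h4 : ‖q - k‖ < ‖p‖ := by rwa [dist_eq_norm] at hdk
      nlinarith
  exact le_antisymm hupper hlower

end Aux

lemma norm_id {E : Type*} [NormedAddCommGroup E] [InnerProductSpace ℝ E] (u zm z v : E) :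
    ‖u - zm‖ ^ 2 - ‖z - zm‖ ^ 2 - 2 * ⟪v, u - z⟫ = ‖u - zm - v‖ ^ 2 - ‖v + zm - z‖ ^ 2 := by
  have h1 : ‖u - zm - v‖ ^ 2 = ‖u - zm‖ ^ 2 - 2 * ⟪u - zm, v⟫ + ‖v‖ ^ 2 := norm_sub_sq_real _ _
  have h2 : ‖v + zm - z‖ ^ 2 = ‖v‖ ^ 2 - 2 * ⟪v, z - zm⟫ + ‖z - zm‖ ^ 2 := by
    rw [show v + zm - z = v - (z - zm) by abel]; exact norm_sub_sq_real _ _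
  have e1 : ⟪u - zm, v⟫ = ⟪v, u⟫ - ⟪v, zm⟫ := by rw [real_inner_comm, inner_sub_right]
  have e2 : ⟪v, z - zm⟫ = ⟪v, z⟫ - ⟪v, zm⟫ := inner_sub_right _ _ _
  have e3 : ⟪v, u - z⟫ = ⟪v, u⟫ - ⟪v, z⟫ := inner_sub_right _ _ _
  rw [h1, h2, e1, e2, e3]; ring


lemma quad_bound {Dh a r X e Pu Pz I : ℝ} (hvr : a ^ 2 + 2 * e ≤ (1/2) * r ^ 2)
    (hid : Pu - Pz - 2 * I = X - r ^ 2) (htri2 : X ≤ (Dh + a) ^ 2) (he : 0 ≤ e) :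
    (1/2) * Pu - (1/2) * Pz - I + e ≤ Dh ^ 2 := by
  nlinarith [sq_nonneg (Dh - a)]

lemma shift_aux {c t s d C : ℝ} (hc : 0 < c) (hd0 : 0 ≤ d) (hd : d ≤ t + (t + s))
    (ht : t ≤ C) (hs : s ≤ C) (ht0 : 0 ≤ t) (hs0 : 0 ≤ s) (hC : 0 ≤ C) :
    (1 / (2 * c)) * (d ^ 2 - t ^ 2) ≤ (1 / (2 * c)) * (t ^ 2 - s ^ 2) + 4 * C ^ 2 / c := by
  have hX : d ^ 2 - 2 * t ^ 2 + s ^ 2 ≤ 8 * C ^ 2 := by nlinarith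
  have h1 : (0:ℝ) < 1 / (2 * c) := by positivity
  have h2 : (1 / (2 * c)) * (d ^ 2 - 2 * t ^ 2 + s ^ 2) ≤ (1 / (2 * c)) * (8 * C ^ 2) :=
    mul_le_mul_of_nonneg_left hX h1.le
  have h3 : (1 / (2 * c)) * (8 * C ^ 2) = 4 * C ^ 2 / c := by field_simp; ring
  have expand : (1 / (2 * c)) * (d ^ 2 - t ^ 2) =
      (1 / (2 * c)) * (t ^ 2 - s ^ 2) + (1 / (2 * c)) * (d ^ 2 - 2 * t ^ 2 + s ^ 2) := by ring
  linarith

/-- upper bound on the augmented Lagrangian at the iterate produced by one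
NL-IAPIAL prox step, when the multipliers are bounded (Lemma 4.5 of the paper).
`φ* = inf {f(u) + h(u) : u ∈ F}` where `F = {z ∈ H : g(z) ∈ −K}` is the feasible set. -/
theorem auglag_upper_bound
    {E F : Type*}
    [NormedAddCommGroup E] [InnerProductSpace ℝ E] [FiniteDimensional ℝ E]
    [NormedAddCommGroup F] [InnerProductSpace ℝ F] [FiniteDimensional ℝ F]
    -- K is a nonempty closed convex cone
    (K : Set F) (hKne : K.Nonempty) (hKcl : IsClosed K) (hKcvx : Convex ℝ K)
    (hKcone : ∀ t : ℝ, 0 < t → ∀ x ∈ K, t • x ∈ K)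
    -- (B1): h proper closed convex, K_h-Lipschitz on its compact domain H of diameter ≤ Dh
    (H : Set E) (h : E → ℝ) (Kh Dh : ℝ) (hKh : 0 < Kh) (hDh0 : 0 < Dh)
    (hHne : H.Nonempty) (hHcpt : IsCompact H) (hHcvx : Convex ℝ H)
    (hhcvx : ConvexOn ℝ H h)
    (hhlip : ∀ x ∈ H, ∀ y ∈ H, |h x - h y| ≤ Kh * ‖x - y‖)
    (hDh : ∀ x ∈ H, ∀ y ∈ H, ‖x - y‖ ≤ Dh)
    -- (B2): f differentiable on H with lower curvature m_f and L_f-Lipschitz gradient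
    (f : E → ℝ) (f' : E → E) (mf Lf : ℝ) (hmf : 0 < mf) (hLf : 0 < Lf)
    (hfdiff : ∀ z ∈ H, HasGradientAt f (f' z) z)
    (hflow : ∀ z ∈ H, ∀ z' ∈ H, -(mf / 2) * ‖z' - z‖ ^ 2 ≤ f z' - f z - ⟪f' z, z' - z⟫)
    (hflip : ∀ z ∈ H, ∀ z' ∈ H, ‖f' z' - f' z‖ ≤ Lf * ‖z' - z‖)
    -- (B3): g K-convex and differentiable with L_g-Lipschitz derivative
    (g : E → F) (g' : E → (E →L[ℝ] F)) (Lg : ℝ) (hLg : 0 < Lg)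
    (hgdiff : ∀ z, HasFDerivAt g (g' z) z) (hgK : KConvex K g)
    (hglip : ∀ z z' : E, ‖g' z' - g' z‖ ≤ Lg * ‖z' - z‖)
    -- bounds B_g⁽⁰⁾ and B_g⁽¹⁾
    (Bg0 Bg1 : ℝ) (hBg0 : ∀ z ∈ H, ‖g z‖ ≤ Bg0) (hBg1 : ∀ z ∈ H, ‖g' z‖ ≤ Bg1)
    -- the feasible set is nonempty
    (hFne : {u | u ∈ H ∧ g u ∈ -K}.Nonempty)
    -- data of the prox subproblem
    (lam σ ct : ℝ) (hlam : 0 < lam) (hσ0 : 0 < σ) (hσ1 : σ ≤ 1 / Real.sqrt 2) (hct : 0 < ct)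
    (zm : E) (hzm : zm ∈ H) (pm : F)
    (Lψ : ℝ) (hLψ : Lψ = lam * (Lf + Lg * ‖pm‖ + ct * (Bg0 * Lg + Bg1 ^ 2)) + 1)
    (σ' : ℝ) (hσ' : σ' = σ / Real.sqrt Lψ)
    -- the inexact solution (z, v, ε) of the prox subproblem
    (z : E) (hz : z ∈ H) (v : E) (ε : ℝ) (hε : 0 ≤ ε)
    (hv : v ∈ epsSubdiff H
      (fun u => lam * AugLag K f h g ct u pm + (1 / 2) * ‖u - zm‖ ^ 2) ε z)
    (hvineq : ‖v‖ ^ 2 + 2 * ε ≤ σ' ^ 2 * ‖v + zm - z‖ ^ 2)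
    -- multiplier update, boundedness of multipliers
    (p : F) (hp : IsProjOn (dualCone K) (pm + ct • g z) p)
    (C : ℝ) (hC : 0 ≤ C) (hpC : ‖p‖ ≤ C) (hpmC : ‖pm‖ ≤ C) :
    -- conclusion
    AugLag K f h g ct z p ≤
      sInf ((fun u => f u + h u) '' {u | u ∈ H ∧ g u ∈ -K}) + Dh ^ 2 / lam + 4 * C ^ 2 / ct := by
  classical
  -- basic nonnegativity facts
  have hBg0nn : 0 ≤ Bg0 := le_trans (norm_nonneg _) (hBg0 z hz)
  have hBg1nn : 0 ≤ Bg1 := le_trans (norm_nonneg _) (hBg1 z hz)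
  have hLψ1 : 1 ≤ Lψ := by
    have t1 : 0 ≤ Lg * ‖pm‖ := mul_nonneg hLg.le (norm_nonneg _)
    have t2 : 0 ≤ ct * (Bg0 * Lg + Bg1 ^ 2) :=
      mul_nonneg hct.le (add_nonneg (mul_nonneg hBg0nn hLg.le) (sq_nonneg _))
    have t3 : 0 ≤ lam * (Lf + Lg * ‖pm‖ + ct * (Bg0 * Lg + Bg1 ^ 2)) :=
      mul_nonneg hlam.le (by linarith)
    rw [hLψ]; linarith
  have hσ'sq : σ' ^ 2 ≤ 1 / 2 := by
    have hLψ0 : (0 : ℝ) < Lψ := by linarith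
    have hs : σ' ^ 2 = σ ^ 2 / Lψ := by
      rw [hσ', div_pow, Real.sq_sqrt hLψ0.le]
    have hσsq : σ ^ 2 ≤ 1 / 2 := by
      have h1 : σ ^ 2 ≤ (1 / Real.sqrt 2) ^ 2 := pow_le_pow_left₀ hσ0.le hσ1 2
      have h2 : (1 / Real.sqrt 2) ^ 2 = 1 / 2 := by
        rw [div_pow, one_pow, Real.sq_sqrt (by norm_num : (0:ℝ) ≤ 2)]
      linarith
    rw [hs, div_le_iff₀ hLψ0]
    nlinarith [sq_nonneg σ]
  have hvr : ‖v‖ ^ 2 + 2 * ε ≤ (1 / 2) * ‖v + zm - z‖ ^ 2 := by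
    nlinarith [hvineq, sq_nonneg ‖v + zm - z‖]
  -- Moreau : infDist (pm + ct • g z) (-K) = ‖p‖
  have hq := moreau_infDist K hKne hKcl hKcvx hKcone hp
  -- key bound for every feasible u
  have key : ∀ u ∈ {u : E | u ∈ H ∧ g u ∈ -K},
      AugLag K f h g ct z p ≤ f u + h u + Dh ^ 2 / lam + 4 * C ^ 2 / ct := by
    rintro u ⟨huH, huK⟩
    -- feasibility at u: augmented Lagrangian below f u + h u
    have hctgu : ct • g u ∈ -K := by
      have h1 : -g u ∈ K := Set.mem_neg.mp huK
      have h2 := hKcone ct hct _ h1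
      rw [Set.mem_neg]
      simpa [smul_neg] using h2
    have hdu : Metric.infDist (pm + ct • g u) (-K) ≤ ‖pm‖ := by
      have := Metric.infDist_le_dist_of_mem hctgu (x := pm + ct • g u)
      simpa [dist_eq_norm] using this
    have hLu : AugLag K f h g ct u pm ≤ f u + h u := by
      unfold AugLag
      have h2 : Metric.infDist (pm + ct • g u) (-K) ^ 2 ≤ ‖pm‖ ^ 2 :=
        pow_le_pow_left₀ Metric.infDist_nonneg hdu 2
      have h3 : (1 / (2 * ct)) * (Metric.infDist (pm + ct • g u) (-K) ^ 2 - ‖pm‖ ^ 2) ≤ 0 :=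
        mul_nonpos_of_nonneg_of_nonpos (by positivity) (by linarith)
      linarith
    -- ε-subgradient inequality at u
    have hsub : lam * AugLag K f h g ct z pm + (1/2) * ‖z - zm‖ ^ 2 + ⟪v, u - z⟫ - ε ≤
        lam * AugLag K f h g ct u pm + (1/2) * ‖u - zm‖ ^ 2 := hv u huH
    -- quadratic manipulation
    have hid := norm_id u zm z v
    have hDzu : ‖u - zm‖ ≤ Dh := hDh u huH zm hzm
    have htri : ‖u - zm - v‖ ≤ Dh + ‖v‖ := le_trans (norm_sub_le _ _) (by linarith)
    have htri2 : ‖u - zm - v‖ ^ 2 ≤ (Dh + ‖v‖) ^ 2 :=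
      pow_le_pow_left₀ (norm_nonneg _) htri 2
    have hA : (1/2) * ‖u - zm‖ ^ 2 - (1/2) * ‖z - zm‖ ^ 2 - ⟪v, u - z⟫ + ε ≤ Dh ^ 2 :=
      quad_bound hvr hid htri2 hε
    have hLu' : lam * AugLag K f h g ct u pm ≤ lam * (f u + h u) :=
      mul_le_mul_of_nonneg_left hLu hlam.le
    have hstep : lam * AugLag K f h g ct z pm ≤ lam * (f u + h u) + Dh ^ 2 := by
      linarith [hsub, hA, hLu']
    have hLz : AugLag K f h g ct z pm ≤ f u + h u + Dh ^ 2 / lam := by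
      have h' : lam * AugLag K f h g ct z pm ≤ lam * (f u + h u + Dh ^ 2 / lam) := by
        rw [mul_add, mul_div_cancel₀ _ (ne_of_gt hlam)]; linarith
      exact le_of_mul_le_mul_left (by linarith [h']) hlam
    -- multiplier shift
    have hd1 : Metric.infDist (p + ct • g z) (-K) ≤ ‖p‖ + (‖p‖ + ‖pm‖) := by
      have hlip := Metric.infDist_le_infDist_add_dist
        (x := p + ct • g z) (y := pm + ct • g z) (s := -K)
      have hdd : dist (p + ct • g z) (pm + ct • g z) = ‖p - pm‖ := by
        rw [dist_eq_norm]; congr 1; abel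
      have hn : ‖p - pm‖ ≤ ‖p‖ + ‖pm‖ := norm_sub_le _ _
      rw [hdd, hq] at hlip
      linarith
    have hshift : AugLag K f h g ct z p ≤ AugLag K f h g ct z pm + 4 * C ^ 2 / ct := by
      unfold AugLag
      rw [hq]
      have := shift_aux (t := ‖p‖) (s := ‖pm‖) (d := Metric.infDist (p + ct • g z) (-K))
        hct Metric.infDist_nonneg hd1 hpC hpmC (norm_nonneg p) (norm_nonneg pm) hC
      linarith
    linarith [hLz, hshift]
  -- conclude via the infimum
  have hne : ((fun u => f u + h u) '' {u : E | u ∈ H ∧ g u ∈ -K}).Nonempty := hFne.image _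
  have hle : AugLag K f h g ct z p - Dh ^ 2 / lam - 4 * C ^ 2 / ct ≤
      sInf ((fun u => f u + h u) '' {u : E | u ∈ H ∧ g u ∈ -K}) := by
    refine le_csInf hne ?_
    rintro b ⟨u, hu, rfl⟩
    have := key u hu
    simp only
    linarith
  linarith
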